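/- Let A be an n×n integer matrix with nonnegative entries (the adjacency matrix of a finite digraph) and assume δ(A) = 0, i.e. the order of vanishing r_A of g_A(u) = det(I − u·A) at u = 1 equals the free rank of BF(A) = ℤⁿ/(I − A)ℤⁿ. Then there exists a nonzero integer m(A) such that g_A*(1) = m(A) · #BF(A)_tors; in particular g_A*(1) is a nonzero integer divisible by the cardinality of the torsion subgroup of the Bowen–Franks group. (Paper's Theorem 'the_special_value'.) -/

import Mathlib

open Polynomial

/-- The reverse characteristic polynomial `g_A(u) = det(I - u • A) ∈ ℤ[u]`. -/
noncomputable def revCharPoly {n : ℕ} (A : Matrix (Fin n) (Fin n) ℤ) : Polynomial ℤ :=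
  Matrix.det ((1 : Matrix (Fin n) (Fin n) (Polynomial ℤ)) - (X : Polynomial ℤ) • A.map C)

/-- The Bowen--Franks group `BF(A) = ℤⁿ/(I - A)ℤⁿ`. -/
abbrev BFGroup {n : ℕ} (A : Matrix (Fin n) (Fin n) ℤ) :=
  (Fin n → ℤ) ⧸ LinearMap.range (Matrix.toLin' ((1 : Matrix (Fin n) (Fin n) ℤ) - A))

open Finset


/-- Key divisibility lemma: if every entry of row `j` of `N` is divisible by `d j`, then the
coefficient of `X ^ #{j | d j = 0}` in `det (N - X • M)` is divisible by `∏_{d j ≠ 0} d j`. -/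
lemma prod_dvd_coeff_det {n : ℕ} (d : Fin n → ℤ) (N M : Matrix (Fin n) (Fin n) ℤ)
    (h : ∀ j i, d j ∣ N j i) :
    (∏ j ∈ univ.filter (fun j => d j ≠ 0), d j) ∣
      (Matrix.det (N.map C - (X : ℤ[X]) • M.map C)).coeff
        (univ.filter (fun j => d j = 0)).card := by
  classical
  set z := (univ.filter (fun j => d j = 0)).card with hz
  set P := ∏ j ∈ univ.filter (fun j => d j ≠ 0), d j with hP
  rw [Matrix.det_apply, Polynomial.finset_sum_coeff]
  apply Finset.dvd_sum
  intro σ _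
  rw [Polynomial.coeff_smul, Units.smul_def, smul_eq_mul]
  apply Dvd.dvd.mul_left
  have hentry : ∀ i, (N.map C - (X : ℤ[X]) • M.map C) (σ i) i
      = C (N (σ i) i) + (-(C (M (σ i) i)) * X) := by
    intro i
    simp [Matrix.sub_apply, Matrix.smul_apply, Matrix.map_apply, smul_eq_mul, sub_eq_add_neg]
    ring
  simp only [hentry]
  rw [Finset.prod_add, Polynomial.finset_sum_coeff]
  apply Finset.dvd_sum
  intro t _
  have hprodneg : (∏ i ∈ univ \ t, (-(C (M (σ i) i)) * X))
      = C (∏ i ∈ univ \ t, (-(M (σ i) i))) * X ^ (univ \ t).card := by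
    rw [Finset.prod_mul_distrib, Finset.prod_const, map_prod]
    simp
  rw [hprodneg,
    show (∏ i ∈ t, C (N (σ i) i)) = C (∏ i ∈ t, N (σ i) i) by rw [map_prod],
    ← mul_assoc, ← map_mul, Polynomial.coeff_C_mul, Polynomial.coeff_X_pow]
  by_cases hk : z = (univ \ t).card
  · rw [if_pos hk, mul_one]
    apply Dvd.dvd.mul_right
    by_cases hex : ∃ i ∈ t, d (σ i) = 0
    · obtain ⟨i, hi, h0⟩ := hex
      have hN0 : N (σ i) i = 0 := by
        have := h (σ i) i; rw [h0] at this; exact zero_dvd_iff.mp this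
      rw [Finset.prod_eq_zero (f := fun i => N (σ i) i) hi hN0]
      exact dvd_zero _
    · push_neg at hex
      have htcard : t.card = (univ.filter (fun j => d j ≠ 0)).card := by
        have h1 : (univ \ t).card = Fintype.card (Fin n) - t.card := by
          rw [Finset.card_sdiff_of_subset t.subset_univ, Finset.card_univ]
        have h2 : (univ.filter (fun j => d j = 0)).card
            + (univ.filter (fun j => d j ≠ 0)).card = Fintype.card (Fin n) := by
          simpa [ne_eq] using Finset.card_filter_add_card_filter_not
            (s := (univ : Finset (Fin n))) (p := fun j => d j = 0)
        have h3 : t.card ≤ Fintype.card (Fin n) := by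
          simpa using Finset.card_le_card t.subset_univ
        omega
      have himg : t.image σ = univ.filter (fun j => d j ≠ 0) := by
        apply Finset.eq_of_subset_of_card_le
        · intro j hj
          simp only [Finset.mem_image] at hj
          obtain ⟨i, hi, rfl⟩ := hj
          simp only [Finset.mem_filter, Finset.mem_univ, true_and]
          exact hex i hi
        · rw [Finset.card_image_of_injective _ σ.injective, htcard]
      calc P = ∏ j ∈ t.image σ, d j := by rw [himg]
        _ = ∏ i ∈ t, d (σ i) :=
          Finset.prod_image (fun a _ b _ hab => σ.injective hab)
        _ ∣ ∏ i ∈ t, N (σ i) i :=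
          Finset.prod_dvd_prod_of_dvd _ _ (fun i _ => h (σ i) i)
  · rw [if_neg hk, mul_zero]
    exact dvd_zero _

lemma taylor_revCharPoly {n : ℕ} (A : Matrix (Fin n) (Fin n) ℤ) :
    taylor 1 (revCharPoly A) =
      Matrix.det (((1 : Matrix (Fin n) (Fin n) ℤ) - A).map C - (X : ℤ[X]) • A.map C) := by
  have h1 : taylor 1 (revCharPoly A) = (aeval (X + C 1 : ℤ[X])) (revCharPoly A) := by
    rw [taylor_apply, Polynomial.comp, aeval_def]
    congr 1
  rw [h1]
  unfold revCharPoly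
  rw [AlgHom.map_det]
  congr 1
  refine Matrix.ext fun i j => ?_
  by_cases hij : i = j <;>
    simp [hij, Matrix.map_apply, Matrix.sub_apply, Matrix.smul_apply, Matrix.one_apply,
      smul_eq_mul, map_sub, map_mul, aeval_X, aeval_C, algebraMap_int_eq, eq_intCast,
      Polynomial.C_eq_intCast] <;> ring

lemma revCharPoly_ne_zero {n : ℕ} (A : Matrix (Fin n) (Fin n) ℤ) : revCharPoly A ≠ 0 := by
  intro h0
  have h1 : (revCharPoly A).eval 0 = 1 := by
    unfold revCharPoly
    rw [show Polynomial.eval (0:ℤ)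
        ((1 : Matrix (Fin n) (Fin n) ℤ[X]) - (X : ℤ[X]) • Matrix.map A ⇑C).det
        = (evalRingHom 0) ((1 : Matrix (Fin n) (Fin n) ℤ[X])
          - (X : ℤ[X]) • Matrix.map A ⇑C).det from rfl,
      RingHom.map_det, RingHom.mapMatrix_apply]
    rw [show ((1 : Matrix (Fin n) (Fin n) ℤ[X]) - (X : ℤ[X]) • Matrix.map A ⇑C).map (evalRingHom 0)
        = (1 : Matrix (Fin n) (Fin n) ℤ) by
      refine Matrix.ext fun i j => ?_
      by_cases hij : i = j <;>
        simp [hij, Matrix.map_apply, Matrix.sub_apply, Matrix.smul_apply, Matrix.one_apply,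
          smul_eq_mul]]
    exact Matrix.det_one
  rw [h0] at h1
  simp at h1

lemma taylor_coeff_rootMult_ne_zero {p : ℤ[X]} (hp : p ≠ 0) :
    (taylor 1 p).coeff (p.rootMultiplicity 1) ≠ 0 := by
  set r := p.rootMultiplicity 1 with hr
  set q := p /ₘ (X - C 1) ^ r with hq
  have hfac : (X - C 1) ^ r * q = p := p.pow_mul_divByMonic_rootMultiplicity_eq 1
  have heval : q.eval 1 ≠ 0 := eval_divByMonic_pow_rootMultiplicity_ne_zero 1 hp
  have hXpow : ∀ m : ℕ, taylor (1:ℤ) ((X - C 1) ^ m) = X ^ m := by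
    intro m
    induction m with
    | zero => simp [taylor_one]
    | succ m ih =>
        rw [pow_succ, taylor_mul, ih, pow_succ]
        congr 1
        rw [map_sub, taylor_X, taylor_C]; ring
  have ht : taylor 1 p = X ^ r * taylor 1 q := by
    conv_lhs => rw [← hfac]
    rw [taylor_mul, hXpow]
  rw [ht]
  have h2 := Polynomial.coeff_X_pow_mul ((taylor 1) q) r 0
  rw [zero_add] at h2
  rw [h2, taylor_coeff_zero]
  exact heval


lemma map_torsion_eq {R M N : Type*} [CommRing R] [AddCommGroup M] [Module R M]
    [AddCommGroup N] [Module R N] (e : M ≃ₗ[R] N) :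
    (Submodule.torsion R M).map (e : M →ₗ[R] N) = Submodule.torsion R N := by
  ext y
  rw [Submodule.mem_map_equiv]
  rw [Submodule.mem_torsion_iff, Submodule.mem_torsion_iff]
  constructor
  · rintro ⟨a, ha⟩
    refine ⟨a, ?_⟩
    rw [Submonoid.smul_def] at ha ⊢
    have := congrArg e ha
    rwa [map_smul, e.apply_symm_apply, map_zero] at this
  · rintro ⟨a, ha⟩
    refine ⟨a, ?_⟩
    rw [Submonoid.smul_def] at ha ⊢
    have := congrArg e.symm ha
    rwa [map_smul, map_zero] at this

lemma natCard_pi_submodule {ι : Type*} [Fintype ι] {M : ι → Type*} [∀ i, AddCommGroup (M i)]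
    [∀ i, Module ℤ (M i)] (p : ∀ i, Submodule ℤ (M i)) :
    Nat.card (Submodule.pi Set.univ p) = ∏ i, Nat.card (p i) := by
  have e : (Submodule.pi Set.univ p) ≃ ∀ i, p i :=
    { toFun := fun x i => ⟨x.1 i, Submodule.mem_pi.mp x.2 i (Set.mem_univ i)⟩
      invFun := fun y => ⟨fun i => y i, Submodule.mem_pi.mpr fun i _ => (y i).2⟩
      left_inv := fun x => rfl
      right_inv := fun y => rfl }
  rw [Nat.card_congr e, Nat.card_pi]


set_option maxHeartbeats 2000000 in
/-- Paper's Theorem `the_special_value`: if `δ(A) = 0`, i.e. the order of vanishing `r_A` of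
`g_A(u) = det(I − u·A)` at `u = 1` equals the free rank of `BF(A)`, then there is a nonzero
integer `m(A)` with `g_A*(1) = m(A) · #BF(A)_tors`. -/
theorem stmt3 {n : ℕ} (A : Matrix (Fin n) (Fin n) ℤ) (hA : ∀ i j, 0 ≤ A i j)
    (hδ : (revCharPoly A).rootMultiplicity 1 = Module.finrank ℤ (BFGroup A)) :
    ∃ m : ℤ, m ≠ 0 ∧
      (Polynomial.taylor 1 (revCharPoly A)).coeff ((revCharPoly A).rootMultiplicity 1) =
        m * (Nat.card (Submodule.torsion ℤ (BFGroup A)) : ℤ) := by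
  classical
  obtain ⟨k, snf⟩ := (LinearMap.range (Matrix.toLin'
      ((1 : Matrix (Fin n) (Fin n) ℤ) - A))).smithNormalForm (Pi.basisFun ℤ (Fin n))
  -- the diagonal entries, extended by zero
  set d : Fin n → ℤ := fun j => if h : ∃ i, snf.f i = j then snf.a h.choose else 0 with hdd
  have ha : ∀ i, snf.a i ≠ 0 := by
    intro i hai
    have h1 := snf.snf i
    rw [hai, zero_smul] at h1
    exact snf.bN.ne_zero i (Subtype.coe_injective (by simpa using h1))
  have hdf : ∀ i, d (snf.f i) = snf.a i := by
    intro i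
    have hex : ∃ i', snf.f i' = snf.f i := ⟨i, rfl⟩
    simp only [hdd, dif_pos hex]
    congr 1
    exact snf.f.injective hex.choose_spec
  have hd0 : ∀ j, j ∉ Set.range snf.f → d j = 0 := by
    intro j hj
    have hne : ¬ ∃ i, snf.f i = j := by simpa [Set.mem_range] using hj
    simp only [hdd, dif_neg hne]
  have hdne : ∀ i, d (snf.f i) ≠ 0 := fun i => (hdf i) ▸ ha i
  -- coordinates of elements in the range are divisible by d
  have hdvd : ∀ x, x ∈ LinearMap.range (Matrix.toLin' ((1 : Matrix (Fin n) (Fin n) ℤ) - A)) →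
      ∀ j, d j ∣ snf.bM.repr x j := by
    intro x hx j
    by_cases hjr : j ∈ Set.range snf.f
    · obtain ⟨i, rfl⟩ := hjr
      have h3 := snf.repr_apply_embedding_eq_repr_smul (m := ⟨x, hx⟩) (i := i)
      rw [map_smul, Finsupp.smul_apply, smul_eq_mul] at h3
      rw [hdf]
      exact ⟨_, h3⟩
    · rw [snf.repr_eq_zero_of_notMem_range ⟨x, hx⟩ hjr]
      exact dvd_zero _
  have hmem : ∀ x : Fin n → ℤ, (∀ j, d j ∣ snf.bM.repr x j) →
      x ∈ LinearMap.range (Matrix.toLin' ((1 : Matrix (Fin n) (Fin n) ℤ) - A)) := by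
    intro x hx
    have hx0 : ∀ j, j ∉ Set.range snf.f → snf.bM.repr x j = 0 := by
      intro j hj
      have h2 := hx j
      rw [hd0 j hj] at h2
      exact zero_dvd_iff.mp h2
    set y := ∑ i, ((snf.bM.repr x (snf.f i)) / snf.a i) • snf.bN i with hy
    have hxy : x = (y : Fin n → ℤ) := by
      have hcoe : (y : Fin n → ℤ)
          = ∑ i, (snf.bM.repr x (snf.f i)) • (snf.bM (snf.f i)) := by
        rw [hy]
        push_cast
        refine Finset.sum_congr rfl fun i _ => ?_
        rw [snf.snf i, smul_smul, Int.ediv_mul_cancel (hdf i ▸ hx (snf.f i))]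
      rw [hcoe]
      have hrepr := snf.bM.sum_repr x
      calc x = ∑ j, snf.bM.repr x j • snf.bM j := hrepr.symm
        _ = ∑ j ∈ Finset.univ.image snf.f, snf.bM.repr x j • snf.bM j := by
            refine (Finset.sum_subset (Finset.subset_univ _) fun j _ hj => ?_).symm
            rw [hx0 j (by simpa [Finset.mem_image, Set.mem_range] using hj), zero_smul]
        _ = ∑ i, snf.bM.repr x (snf.f i) • snf.bM (snf.f i) :=
            Finset.sum_image fun a _ b _ h => snf.f.injective h
    rw [hxy]
    exact y.2
  -- the pi description of the range
  set sp : Fin n → Submodule ℤ ℤ := fun j => Ideal.span {d j} with hsp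
  have hmap : (LinearMap.range (Matrix.toLin'
        ((1 : Matrix (Fin n) (Fin n) ℤ) - A))).map
      (snf.bM.equivFun : (Fin n → ℤ) →ₗ[ℤ] (Fin n → ℤ)) = Submodule.pi Set.univ sp := by
    ext w
    rw [Submodule.mem_map_equiv, Submodule.mem_pi]
    constructor
    · intro hw j _
      have := hdvd _ hw j
      rw [← Module.Basis.equivFun_apply, LinearEquiv.apply_symm_apply] at this
      exact Ideal.mem_span_singleton.mpr this
    · intro hw
      apply hmem
      intro j
      have := Ideal.mem_span_singleton.mp (hw j (Set.mem_univ j))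
      rwa [← Module.Basis.equivFun_apply, LinearEquiv.apply_symm_apply]
  have e1 : BFGroup A ≃ₗ[ℤ] ((Fin n → ℤ) ⧸ Submodule.pi Set.univ sp) :=
    Submodule.Quotient.equiv _ _ snf.bM.equivFun hmap
  -- rank computation
  set N'' : Submodule ℤ (Fin n → ℤ) :=
    Submodule.pi Set.univ (fun j => if d j = 0 then (⊥ : Submodule ℤ ℤ) else ⊤) with hN''
  have hle : Submodule.pi Set.univ sp ≤ N'' := by
    intro x hxm
    rw [Submodule.mem_pi] at hxm ⊢
    intro j _
    by_cases h0 : d j = 0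
    · rw [if_pos h0]
      have h2 : d j ∣ x j := Ideal.mem_span_singleton.mp (hxm j (Set.mem_univ j))
      rw [h0] at h2
      simpa using zero_dvd_iff.mp h2
    · rw [if_neg h0]; trivial
  set P : ℤ := ∏ j ∈ Finset.univ.filter (fun j => d j ≠ 0), d j with hPdef
  have hP0 : P ≠ 0 :=
    Finset.prod_ne_zero_iff.mpr fun j hj => (Finset.mem_filter.mp hj).2
  have hT : N''.map (Submodule.pi Set.univ sp).mkQ ≤
      Submodule.torsion ℤ ((Fin n → ℤ) ⧸ Submodule.pi Set.univ sp) := by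
    rintro _ ⟨w, hw, rfl⟩
    rw [Submodule.mem_torsion_iff]
    refine ⟨⟨P, mem_nonZeroDivisors_of_ne_zero hP0⟩, ?_⟩
    rw [Submonoid.smul_def, Submodule.mkQ_apply, ← Submodule.Quotient.mk_smul,
      Submodule.Quotient.mk_eq_zero, Submodule.mem_pi]
    intro j _
    refine Ideal.mem_span_singleton.mpr ?_
    rw [Pi.smul_apply, smul_eq_mul]
    by_cases h0 : d j = 0
    · have hw2 := Submodule.mem_pi.mp hw j (Set.mem_univ j)
      rw [if_pos h0] at hw2
      have : w j = 0 := by simpa using hw2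
      rw [this, mul_zero]
      exact dvd_zero _
    · exact (Finset.dvd_prod_of_mem d
        (Finset.mem_filter.mpr ⟨Finset.mem_univ j, h0⟩)).mul_right _
  have e3 := Submodule.quotientQuotientEquivQuotient (Submodule.pi Set.univ sp) N'' hle
  set π : (Fin n → ℤ) →ₗ[ℤ] ({j : Fin n // d j = 0} → ℤ) :=
    LinearMap.funLeft ℤ ℤ (Subtype.val) with hπ
  have hker : LinearMap.ker π = N'' := by
    ext x
    rw [LinearMap.mem_ker, hN'', Submodule.mem_pi]
    constructor
    · intro hx j _
      by_cases h0 : d j = 0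
      · rw [if_pos h0]
        have := congrFun hx ⟨j, h0⟩
        simpa [hπ, LinearMap.funLeft_apply] using this
      · rw [if_neg h0]; trivial
    · intro hx
      funext j'
      have := hx j'.1 (Set.mem_univ _)
      rw [if_pos j'.2] at this
      simpa [hπ, LinearMap.funLeft_apply] using this
  have hsurj : Function.Surjective π :=
    LinearMap.funLeft_surjective_of_injective ℤ ℤ _ Subtype.val_injective
  have e4 : ((Fin n → ℤ) ⧸ N'') ≃ₗ[ℤ] ({j : Fin n // d j = 0} → ℤ) :=
    (Submodule.quotEquivOfEq _ _ hker.symm).trans (π.quotKerEquivOfSurjective hsurj)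
  set z := (Finset.univ.filter (fun j => d j = 0)).card with hzdef
  have hrank : Module.finrank ℤ (BFGroup A) = z := by
    have h2 : Module.rank ℤ ((Fin n → ℤ) ⧸ Submodule.pi Set.univ sp)
        = Module.rank ℤ ({j : Fin n // d j = 0} → ℤ) := by
      rw [← rank_quotient_eq_of_le_torsion hT]
      exact (e3.trans e4).rank_eq
    have h3 : Module.finrank ℤ (BFGroup A)
        = Module.finrank ℤ ({j : Fin n // d j = 0} → ℤ) := by
      show (Module.rank ℤ (BFGroup A)).toNat = (Module.rank ℤ _).toNat
      rw [e1.rank_eq, h2]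
    rw [h3, Module.finrank_pi, Fintype.card_subtype]
  -- torsion cardinality
  have htors : Nat.card (Submodule.torsion ℤ (BFGroup A)) = P.natAbs := by
    have e2 : ((Fin n → ℤ) ⧸ Submodule.pi Set.univ sp) ≃ₗ[ℤ] ∀ j, ℤ ⧸ sp j :=
      Submodule.quotientPi sp
    set E := e1.trans e2 with hE
    have h1 : Nat.card (Submodule.torsion ℤ (BFGroup A))
        = Nat.card (Submodule.torsion ℤ (∀ j, ℤ ⧸ sp j)) := by
      rw [← map_torsion_eq E]
      exact Nat.card_congr
        (Submodule.equivMapOfInjective E.toLinearMap E.injective _).toEquiv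
    have h2 : Submodule.torsion ℤ (∀ j, ℤ ⧸ sp j)
        = Submodule.pi Set.univ (fun j => Submodule.torsion ℤ (ℤ ⧸ sp j)) := by
      ext x
      rw [Submodule.mem_pi, Submodule.mem_torsion_iff]
      constructor
      · rintro ⟨a, hax⟩ j _
        rw [Submodule.mem_torsion_iff]
        refine ⟨a, ?_⟩
        rw [Submonoid.smul_def] at hax ⊢
        calc (a : ℤ) • x j = ((a : ℤ) • x) j := rfl
          _ = 0 := by rw [hax]; rfl
      · intro hx
        choose c hc using fun j => (Submodule.mem_torsion_iff _).mp (hx j (Set.mem_univ j))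
        refine ⟨⟨∏ j, (c j : ℤ), mem_nonZeroDivisors_of_ne_zero
          (Finset.prod_ne_zero_iff.mpr fun j _ => nonZeroDivisors.coe_ne_zero (c j))⟩, ?_⟩
        rw [Submonoid.smul_def]
        funext j
        have hcj : (c j : ℤ) • x j = 0 := by
          have := hc j; rwa [Submonoid.smul_def] at this
        calc ((∏ j', (c j' : ℤ)) • x) j = (∏ j', (c j' : ℤ)) • x j := rfl
          _ = ((∏ j' ∈ Finset.univ.erase j, (c j' : ℤ)) * (c j : ℤ)) • x j := by
              rw [Finset.prod_erase_mul _ _ (Finset.mem_univ j)]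
          _ = (∏ j' ∈ Finset.univ.erase j, (c j' : ℤ)) • ((c j : ℤ) • x j) := by
              rw [mul_smul]
          _ = 0 := by rw [hcj, smul_zero]
    have h4 : ∀ j, Nat.card (Submodule.torsion ℤ (ℤ ⧸ sp j))
        = if d j = 0 then 1 else (d j).natAbs := by
      intro j
      by_cases h0 : d j = 0
      · rw [if_pos h0]
        have hbot : Submodule.torsion ℤ (ℤ ⧸ sp j) = ⊥ := by
          rw [eq_bot_iff]
          intro x hx
          obtain ⟨a, hax⟩ := (Submodule.mem_torsion_iff _).mp hx
          obtain ⟨w, rfl⟩ := Submodule.Quotient.mk_surjective _ x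
          rw [Submonoid.smul_def, ← Submodule.Quotient.mk_smul,
            Submodule.Quotient.mk_eq_zero] at hax
          have h5 := Ideal.mem_span_singleton.mp hax
          rw [h0] at h5
          have h6 : (a : ℤ) • w = 0 := zero_dvd_iff.mp h5
          have h7 : w = 0 := by
            rcases mul_eq_zero.mp (by rwa [smul_eq_mul] at h6) with h | h
            · exact absurd h (nonZeroDivisors.coe_ne_zero a)
            · exact h
          rw [h7]
          simp
        rw [hbot]
        simp [Nat.card_eq_one_iff_unique]
      · rw [if_neg h0]
        have htop : Submodule.torsion ℤ (ℤ ⧸ sp j) = ⊤ := by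
          rw [eq_top_iff]
          rintro x -
          obtain ⟨w, rfl⟩ := Submodule.Quotient.mk_surjective _ x
          rw [Submodule.mem_torsion_iff]
          refine ⟨⟨d j, mem_nonZeroDivisors_of_ne_zero h0⟩, ?_⟩
          rw [Submonoid.smul_def, ← Submodule.Quotient.mk_smul,
            Submodule.Quotient.mk_eq_zero]
          exact Ideal.mem_span_singleton.mpr (Dvd.intro w rfl)
        rw [htop, Nat.card_congr (Submodule.topEquiv).toEquiv,
          Nat.card_congr (Int.quotientSpanEquivZMod (d j)).toEquiv, Nat.card_zmod]
    have h5 : (∏ j, (if d j = 0 then 1 else (d j).natAbs)) = P.natAbs := by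
      rw [hPdef, show ((∏ j ∈ Finset.univ.filter (fun j => d j ≠ 0), d j)).natAbs
        = ∏ j ∈ Finset.univ.filter (fun j => d j ≠ 0), (d j).natAbs from
          map_prod Int.natAbsHom d _]
      rw [← Finset.prod_filter_mul_prod_filter_not Finset.univ (fun j => d j = 0)
        (fun j => if d j = 0 then 1 else (d j).natAbs)]
      rw [Finset.prod_congr rfl (fun j hj => if_pos (Finset.mem_filter.mp hj).2),
        Finset.prod_const_one, one_mul]
      exact Finset.prod_congr rfl fun j hj => if_neg (Finset.mem_filter.mp hj).2
    rw [h1, h2, natCard_pi_submodule, ← h5]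
    exact Finset.prod_congr rfl fun j _ => h4 j
  -- divisibility of the special value
  have hPd : P ∣ (taylor 1 (revCharPoly A)).coeff z := by
    set L : Matrix (Fin n) (Fin n) ℤ := (Pi.basisFun ℤ (Fin n)).toMatrix ⇑snf.bM with hL
    haveI : Invertible L := (Pi.basisFun ℤ (Fin n)).invertibleToMatrix snf.bM
    set M' : Matrix (Fin n) (Fin n) ℤ := LinearMap.toMatrix (Pi.basisFun ℤ (Fin n)) snf.bM
      (Matrix.toLin' ((1 : Matrix (Fin n) (Fin n) ℤ) - A)) with hM'
    have hfact : (1 : Matrix (Fin n) (Fin n) ℤ) - A = L * M' := by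
      rw [hL, hM', basis_toMatrix_mul_linearMap_toMatrix]
      rw [show LinearMap.toMatrix (Pi.basisFun ℤ (Fin n)) (Pi.basisFun ℤ (Fin n))
          (Matrix.toLin' ((1 : Matrix (Fin n) (Fin n) ℤ) - A))
          = LinearMap.toMatrix' (Matrix.toLin' ((1 : Matrix (Fin n) (Fin n) ℤ) - A)) from by
        rw [LinearMap.toMatrix_eq_toMatrix']]
      rw [LinearMap.toMatrix'_toLin']
    have hdvdM' : ∀ j i, d j ∣ M' j i := by
      intro j i
      rw [hM', LinearMap.toMatrix_apply]
      exact hdvd _ (LinearMap.mem_range_self _ _) j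
    have hmx : (((1 : Matrix (Fin n) (Fin n) ℤ) - A).map C - (X : ℤ[X]) • A.map C)
        = L.map C * (M'.map C - (X : ℤ[X]) • (⅟L * A).map C) := by
      rw [Matrix.mul_sub, ← Matrix.map_mul, ← hfact]
      congr 1
      rw [Matrix.mul_smul, ← Matrix.map_mul, ← Matrix.mul_assoc, mul_invOf_self, one_mul]
    rw [taylor_revCharPoly, hmx, Matrix.det_mul,
      show (L.map C).det = C L.det from by rw [← RingHom.mapMatrix_apply, ← RingHom.map_det],
      Polynomial.coeff_C_mul]
    exact Dvd.dvd.mul_left (prod_dvd_coeff_det d M' (⅟L * A) hdvdM') _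
  -- conclusion
  have hne := taylor_coeff_rootMult_ne_zero (revCharPoly_ne_zero A)
  rw [hδ, hrank] at hne
  obtain ⟨t, hteq⟩ := hPd
  have htne : t ≠ 0 := by
    rintro rfl
    rw [mul_zero] at hteq
    exact hne hteq
  rcases Int.natAbs_eq P with hcase | hcase
  · refine ⟨t, htne, ?_⟩
    rw [hδ, hrank, hteq, htors]
    linear_combination t * hcase
  · refine ⟨-t, neg_ne_zero.mpr htne, ?_⟩
    rw [hδ, hrank, hteq, htors]
    linear_combination t * hcase
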